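/- Let μ and ν be Borel probability measures on ℝ, with F_μ(z) = 1/G_μ(z), h_μ(z) = F_μ(z) − z, and similarly for ν, on the upper half-plane ℂ⁺. Fix b ∈ ℂ⁺, let ω₁(b) ∈ ℂ⁺ be a fixed point of ω ↦ h_ν(h_μ(ω) + b) + b, and set ω₂(b) = h_μ(ω₁(b)) + b. Then ω₂(b) ∈ ℂ⁺ is a fixed point of ω ↦ h_μ(h_ν(ω) + b) + b, and the subordination identities F_μ(ω₁(b)) = F_ν(ω₂(b)) = ω₁(b) + ω₂(b) − b hold; in particular G_μ(ω₁(b)) = G_ν(ω₂(b)). -/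

import Mathlib

open MeasureTheory Complex

lemma cauchy_key (μ : Measure ℝ) [IsProbabilityMeasure μ] (z : ℂ) (hz : 0 < z.im) :
    (∫ x : ℝ, (z - (x : ℂ))⁻¹ ∂μ) ≠ 0 ∧
      z.im ≤ ((∫ x : ℝ, (z - (x : ℂ))⁻¹ ∂μ)⁻¹).im := by
  set G : ℂ := ∫ x : ℝ, (z - (x : ℂ))⁻¹ ∂μ with hGdef
  have hne : ∀ x : ℝ, z - (x : ℂ) ≠ 0 := by
    intro x h
    have : (z - (x : ℂ)).im = z.im := by simp
    rw [h] at this; simp at this; linarith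
  have hnorm_lb : ∀ x : ℝ, z.im ≤ ‖z - (x : ℂ)‖ := by
    intro x
    calc z.im = (z - (x : ℂ)).im := by simp
    _ ≤ |(z - (x : ℂ)).im| := le_abs_self _
    _ ≤ ‖z - (x : ℂ)‖ := Complex.abs_im_le_norm _
  have hbound : ∀ x : ℝ, ‖(z - (x : ℂ))⁻¹‖ ≤ (z.im)⁻¹ := by
    intro x
    rw [norm_inv]
    exact inv_anti₀ hz (hnorm_lb x)
  have hcont : Continuous fun x : ℝ => (z - (x : ℂ))⁻¹ := by
    apply Continuous.inv₀
    · continuity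
    · exact fun x => hne x
  have hmeas : AEStronglyMeasurable (fun x : ℝ => (z - (x : ℂ))⁻¹) μ :=
    hcont.aestronglyMeasurable
  have hint : Integrable (fun x : ℝ => (z - (x : ℂ))⁻¹) μ := by
    apply Integrable.mono' (integrable_const ((z.im)⁻¹)) hmeas
    exact Filter.Eventually.of_forall hbound
  -- the squared-norm integrand
  have hsq_cont : Continuous fun x : ℝ => (Complex.normSq (z - (x : ℂ)))⁻¹ := by
    apply Continuous.inv₀
    · exact Complex.continuous_normSq.comp (by continuity)
    · intro x; simpa [Complex.normSq_eq_zero] using hne x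
  have hsq_bound : ∀ x : ℝ, ‖(Complex.normSq (z - (x : ℂ)))⁻¹‖ ≤ ((z.im)^2)⁻¹ := by
    intro x
    have h1 : (z.im)^2 ≤ Complex.normSq (z - (x : ℂ)) := by
      rw [Complex.normSq_eq_norm_sq]
      exact pow_le_pow_left₀ hz.le (hnorm_lb x) 2
    rw [Real.norm_eq_abs, _root_.abs_of_nonneg (inv_nonneg.mpr (Complex.normSq_nonneg _))]
    exact inv_anti₀ (by positivity) h1
  have hsq_int : Integrable (fun x : ℝ => (Complex.normSq (z - (x : ℂ)))⁻¹) μ := by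
    apply Integrable.mono' (integrable_const (((z.im)^2)⁻¹)) hsq_cont.aestronglyMeasurable
    exact Filter.Eventually.of_forall hsq_bound
  set I₂ : ℝ := ∫ x : ℝ, (Complex.normSq (z - (x : ℂ)))⁻¹ ∂μ with hI₂def
  have hI₂pos : 0 < I₂ := by
    rw [hI₂def, integral_pos_iff_support_of_nonneg]
    · have : (Function.support fun x : ℝ => (Complex.normSq (z - (x : ℂ)))⁻¹) = Set.univ := by
        ext x
        simp only [Function.mem_support, Set.mem_univ, iff_true]
        have h0 : 0 < Complex.normSq (z - (x : ℂ)) := Complex.normSq_pos.mpr (hne x)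
        positivity
      rw [this]
      simp
    · intro x
      have h0 : 0 ≤ Complex.normSq (z - (x : ℂ)) := Complex.normSq_nonneg _
      positivity
    · exact hsq_int
  have hGim : G.im = -z.im * I₂ := by
    have him : G.im = ∫ x : ℝ, ((z - (x : ℂ))⁻¹).im ∂μ := by
      rw [hGdef]
      simpa using (ContinuousLinearMap.integral_comp_comm Complex.imCLM hint).symm
    rw [him, hI₂def, ← integral_const_mul]
    congr 1; ext x
    rw [Complex.inv_im]
    have h2 : (z - (x : ℂ)).im = z.im := by simp
    rw [h2]
    ring
  have hGne : G ≠ 0 := by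
    intro h
    rw [h] at hGim
    simp at hGim
    rcases hGim with h | h
    · linarith
    · linarith
  refine ⟨hGne, ?_⟩
  -- Cauchy-Schwarz: normSq G ≤ I₂
  have hX_memℒp : MemLp (fun x : ℝ => ‖(z - (x : ℂ))⁻¹‖) 2 μ := by
    apply MemLp.of_bound (hcont.norm.aestronglyMeasurable) ((z.im)⁻¹)
    exact Filter.Eventually.of_forall (fun x => by
      rw [Real.norm_eq_abs, abs_norm]; exact hbound x)
  have hvar := ProbabilityTheory.variance_nonneg (fun x : ℝ => ‖(z - (x : ℂ))⁻¹‖) μ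
  rw [ProbabilityTheory.variance_eq_sub hX_memℒp] at hvar
  have hsq_eq : (∫ x : ℝ, ((fun x : ℝ => ‖(z - (x : ℂ))⁻¹‖)^2) x ∂μ) = I₂ := by
    rw [hI₂def]
    congr 1; ext x
    simp only [Pi.pow_apply]
    rw [norm_inv, inv_pow, Complex.sq_norm]
  rw [hsq_eq] at hvar
  have hCS : (∫ x : ℝ, ‖(z - (x : ℂ))⁻¹‖ ∂μ) ^ 2 ≤ I₂ := by linarith
  have hGnorm : ‖G‖ ≤ ∫ x : ℝ, ‖(z - (x : ℂ))⁻¹‖ ∂μ := by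
    rw [hGdef]; exact norm_integral_le_integral_norm _
  have hGnormsq : Complex.normSq G ≤ I₂ := by
    rw [Complex.normSq_eq_norm_sq]
    calc ‖G‖ ^ 2 ≤ (∫ x : ℝ, ‖(z - (x : ℂ))⁻¹‖ ∂μ) ^ 2 :=
          pow_le_pow_left₀ (norm_nonneg _) hGnorm 2
      _ ≤ I₂ := hCS
  have hnsq_pos : 0 < Complex.normSq G := Complex.normSq_pos.mpr hGne
  rw [Complex.inv_im, hGim]
  have hrw : -(-z.im * I₂) = z.im * I₂ := by ring
  rw [hrw, le_div_iff₀ hnsq_pos]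
  exact mul_le_mul_of_nonneg_left hGnormsq hz.le

/-- Scalar subordination identities (second bullet of Theorem 3.1 of the paper, with `B = ℂ`):
if `ω₁(b)` in the upper half-plane is a fixed point of `ω ↦ h_ν(h_μ(ω) + b) + b` and
`ω₂(b) = h_μ(ω₁(b)) + b`, then `ω₂(b)` lies in the upper half-plane, is a fixed point of
`ω ↦ h_μ(h_ν(ω) + b) + b`, and `F_μ(ω₁(b)) = F_ν(ω₂(b)) = ω₁(b) + ω₂(b) - b`; in particular
`G_μ(ω₁(b)) = G_ν(ω₂(b))`. Here `F_μ = 1/G_μ` and `h_μ(z) = F_μ(z) - z`. -/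
theorem subordination_identities
    (μ ν : Measure ℝ) [IsProbabilityMeasure μ] [IsProbabilityMeasure ν]
    (Gmu Gnu : ℂ → ℂ)
    (hGmu : ∀ z : ℂ, Gmu z = ∫ x : ℝ, (z - (x : ℂ))⁻¹ ∂μ)
    (hGnu : ∀ z : ℂ, Gnu z = ∫ x : ℝ, (z - (x : ℂ))⁻¹ ∂ν)
    (Fmu Fnu : ℂ → ℂ)
    (hFmu : ∀ z : ℂ, Fmu z = (Gmu z)⁻¹)
    (hFnu : ∀ z : ℂ, Fnu z = (Gnu z)⁻¹)
    (hmu hnu : ℂ → ℂ)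
    (hhmu : ∀ z : ℂ, hmu z = Fmu z - z)
    (hhnu : ∀ z : ℂ, hnu z = Fnu z - z)
    (b : ℂ) (hb : 0 < b.im)
    (w₁ : ℂ) (hw₁ : 0 < w₁.im) (hfix : hnu (hmu w₁ + b) + b = w₁)
    (w₂ : ℂ) (hw₂ : w₂ = hmu w₁ + b) :
    0 < w₂.im ∧
      hmu (hnu w₂ + b) + b = w₂ ∧
      Fmu w₁ = Fnu w₂ ∧
      Fnu w₂ = w₁ + w₂ - b ∧
      Gmu w₁ = Gnu w₂ := by
  obtain ⟨hGmu_ne, hFmu_im⟩ : Gmu w₁ ≠ 0 ∧ w₁.im ≤ ((Gmu w₁)⁻¹).im := by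
    have h := cauchy_key μ w₁ hw₁
    rw [← hGmu w₁] at h
    exact h
  have hmu_im : 0 ≤ (hmu w₁).im := by
    rw [hhmu, hFmu]
    simp only [Complex.sub_im]
    linarith
  have hw₂im : 0 < w₂.im := by
    rw [hw₂]
    simp only [Complex.add_im]
    linarith
  obtain ⟨hGnu_ne, -⟩ : Gnu w₂ ≠ 0 ∧ w₂.im ≤ ((Gnu w₂)⁻¹).im := by
    have h := cauchy_key ν w₂ hw₂im
    rw [← hGnu w₂] at h
    exact h
  have hfix' : hnu w₂ + b = w₁ := by rw [hw₂]; exact hfix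
  have hfp : hmu (hnu w₂ + b) + b = w₂ := by rw [hfix', ← hw₂]
  have hF1 : Fmu w₁ = w₁ + w₂ - b := by
    have h := hhmu w₁
    linear_combination -h - hw₂
  have hF2 : Fnu w₂ = w₁ + w₂ - b := by
    have h := hhnu w₂
    linear_combination -h + hfix'
  refine ⟨hw₂im, hfp, hF1.trans hF2.symm, hF2, ?_⟩
  have h := hF1.trans hF2.symm
  rw [hFmu, hFnu] at h
  have h2 : ((Gmu w₁)⁻¹)⁻¹ = ((Gnu w₂)⁻¹)⁻¹ := by rw [h]
  rwa [inv_inv, inv_inv] at h2
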